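/- Suppose T is a real symplectic 2n×2n matrix (TJₙTᵀ = Jₙ) that is also Σ_P-unitary (TΣ_PTᵀ = Σ_P), where Σ_P = diag(σ₁I₂,…,σₙI₂) with σⱼ > 0. If Q is a real symmetric matrix such that T^{-T}QT⁻¹ = Σ_Q for some Σ_Q = diag(τ₁I₂,…,τₙI₂) with τⱼ ≥ 0, then Jₙ Σ_P⁻¹ Q Σ_P Jₙ = -Q. -/

import Mathlib

open Matrix Kronecker Polynomial

/-- The 2×2 symplectic form matrix [[0,1],[-1,0]]. -/
noncomputable def Jb : Matrix (Fin 2) (Fin 2) ℝ := !![0, 1; -1, 0]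

/-- Jₙ = Iₙ ⊗ J₁, indexed by pairs (block index, position within block). -/
noncomputable def Jmat (n : ℕ) : Matrix (Fin n × Fin 2) (Fin n × Fin 2) ℝ :=
  (1 : Matrix (Fin n) (Fin n) ℝ) ⊗ₖ Jb

/-- Block-scalar diagonal matrix diag(σ₁I₂, …, σₙI₂). -/
noncomputable def SigmaD {n : ℕ} (σ : Fin n → ℝ) : Matrix (Fin n × Fin 2) (Fin n × Fin 2) ℝ :=
  Matrix.of fun p q => if p = q then σ p.1 else 0

section helpers
variable {n : ℕ}

lemma SigmaD_mul_SigmaD (f g : Fin n → ℝ) :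
    SigmaD f * SigmaD g = SigmaD (fun j => f j * g j) := by
  ext p q
  simp only [SigmaD, Matrix.mul_apply, Matrix.of_apply, ite_mul, mul_ite, zero_mul, mul_zero,
    Finset.sum_ite_eq, Finset.sum_ite_eq', Finset.mem_univ, if_true]
  rcases eq_or_ne p q with h | h
  · subst h; rfl
  · simp [h]

lemma SigmaD_one : SigmaD (fun _ : Fin n => (1:ℝ)) = 1 := by
  ext p q
  simp [SigmaD, Matrix.one_apply]

lemma SigmaD_transpose (f : Fin n → ℝ) : (SigmaD f)ᵀ = SigmaD f := by
  ext p q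
  simp only [SigmaD, Matrix.transpose_apply, Matrix.of_apply]
  rcases eq_or_ne p q with h | h
  · subst h; simp
  · simp [h, Ne.symm h]

lemma Jb_mul_Jb : Jb * Jb = -1 := by
  ext i j
  fin_cases i <;> fin_cases j <;>
    simp [Jb, Matrix.mul_apply, Fin.sum_univ_two, Matrix.one_apply]

lemma Jmat_mul_Jmat : Jmat n * Jmat n = -1 := by
  unfold Jmat
  rw [← Matrix.mul_kronecker_mul, Matrix.one_mul, Jb_mul_Jb]
  ext p q
  simp only [Matrix.kroneckerMap_apply, Matrix.one_apply, Matrix.neg_apply]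
  by_cases h1 : p.1 = q.1 <;> by_cases h2 : p.2 = q.2 <;>
    simp [h1, h2, Prod.ext_iff, Matrix.one_apply]

lemma Jmat_block (p q : Fin n × Fin 2) (h : p.1 ≠ q.1) : Jmat n p q = 0 := by
  simp [Jmat, Matrix.kroneckerMap_apply, Matrix.one_apply, h]

lemma SigmaD_comm_of (f : Fin n → ℝ) (M : Matrix (Fin n × Fin 2) (Fin n × Fin 2) ℝ)
    (hM : ∀ p q : Fin n × Fin 2, p.1 ≠ q.1 → M p q = 0) :
    SigmaD f * M = M * SigmaD f := by
  ext p q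
  simp only [SigmaD, Matrix.mul_apply, Matrix.of_apply, ite_mul, mul_ite, zero_mul, mul_zero,
    Finset.sum_ite_eq, Finset.sum_ite_eq', Finset.mem_univ, if_true]
  by_cases h : p.1 = q.1
  · rw [h, mul_comm]
  · rw [hM p q h, mul_zero, zero_mul]

lemma SigmaD_block (f : Fin n → ℝ) (p q : Fin n × Fin 2) (h : p.1 ≠ q.1) : SigmaD f p q = 0 := by
  have : p ≠ q := fun e => h (congrArg Prod.fst e)
  simp [SigmaD, this]

end helpers

theorem stmt4 (n : ℕ) (σ : Fin n → ℝ) (hσ : ∀ j, 0 < σ j)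
    (T : Matrix (Fin n × Fin 2) (Fin n × Fin 2) ℝ)
    (hTsymp : T * Jmat n * Tᵀ = Jmat n)
    (hTunit : T * SigmaD σ * Tᵀ = SigmaD σ)
    (Q : Matrix (Fin n × Fin 2) (Fin n × Fin 2) ℝ) (hQ : Q.IsSymm)
    (τ : Fin n → ℝ) (hτ : ∀ j, 0 ≤ τ j)
    (hdiag : (T⁻¹)ᵀ * Q * T⁻¹ = SigmaD τ) :
    Jmat n * (SigmaD σ)⁻¹ * Q * SigmaD σ * Jmat n = -Q := by
  classical
  set J := Jmat n with hJdef
  set S := SigmaD σ with hSdef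
  set S' := SigmaD (fun j => (σ j)⁻¹) with hS'def
  set D := SigmaD τ with hDdef
  have move : ∀ {A B C E : Matrix (Fin n × Fin 2) (Fin n × Fin 2) ℝ}, A * B = C * E →
      ∀ X, A * (B * X) = C * (E * X) := by
    intro A B C E h X; rw [← mul_assoc, h, mul_assoc]
  have hJJ : J * J = -1 := Jmat_mul_Jmat
  have hSS' : S * S' = 1 := by
    rw [hSdef, hS'def, SigmaD_mul_SigmaD]
    have e : (fun j => σ j * (σ j)⁻¹) = fun _ : Fin n => (1:ℝ) := by
      funext j; exact mul_inv_cancel₀ (hσ j).ne'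
    rw [e, SigmaD_one]
  have hS'S : S' * S = 1 := by
    rw [hSdef, hS'def, SigmaD_mul_SigmaD]
    have e : (fun j => (σ j)⁻¹ * σ j) = fun _ : Fin n => (1:ℝ) := by
      funext j; exact inv_mul_cancel₀ (hσ j).ne'
    rw [e, SigmaD_one]
  have hSinv : S⁻¹ = S' := Matrix.inv_eq_right_inv hSS'
  have hSJ : S * J = J * S := SigmaD_comm_of σ (Jmat n) Jmat_block
  have hS'J : S' * J = J * S' := SigmaD_comm_of _ (Jmat n) Jmat_block
  have hDJ : D * J = J * D := SigmaD_comm_of τ (Jmat n) Jmat_block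
  have hS'D : S' * D = D * S' := SigmaD_comm_of _ (SigmaD τ) (SigmaD_block τ)
  have hSt : Sᵀ = S := SigmaD_transpose σ
  have hS't : S'ᵀ = S' := SigmaD_transpose _
  -- invertibility of T
  have hdetJ : IsUnit J.det :=
    Matrix.isUnit_det_of_right_inverse (B := -J) (by rw [mul_neg, hJJ, neg_neg])
  have hdetT : IsUnit T.det := by
    have h1 : T.det * J.det * T.det = J.det := by
      have := congrArg Matrix.det hTsymp
      simpa [Matrix.det_mul, Matrix.det_transpose] using this
    have hJ0 : J.det ≠ 0 := hdetJ.ne_zero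
    have h2 : (T.det * T.det) * J.det = 1 * J.det := by ring_nf; linarith [h1]
    exact IsUnit.of_mul_eq_one _ (mul_right_cancel₀ hJ0 h2)
  have hT'T : T⁻¹ * T = 1 := Matrix.nonsing_inv_mul T hdetT
  have hTT' : T * T⁻¹ = 1 := Matrix.mul_nonsing_inv T hdetT
  have hTt : Tᵀ * (T⁻¹)ᵀ = 1 := by rw [← Matrix.transpose_mul, hT'T, Matrix.transpose_one]
  have hQeq : Q = Tᵀ * (D * T) := by
    calc Q = (Tᵀ * (T⁻¹)ᵀ) * Q * (T⁻¹ * T) := by rw [hTt, hT'T, one_mul, mul_one]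
      _ = Tᵀ * (((T⁻¹)ᵀ * Q * T⁻¹) * T) := by simp only [mul_assoc]
      _ = Tᵀ * (D * T) := by rw [hdiag]
  -- symplectic relations
  have hs1 : J * Tᵀ = T⁻¹ * J := by
    calc J * Tᵀ = (T⁻¹ * T) * (J * Tᵀ) := by rw [hT'T, one_mul]
      _ = T⁻¹ * (T * J * Tᵀ) := by simp only [mul_assoc]
      _ = T⁻¹ * J := by rw [hTsymp]
  have hs2 : T * J = J * (T⁻¹)ᵀ := by
    calc T * J = T * J * (Tᵀ * (T⁻¹)ᵀ) := by rw [hTt, mul_one]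
      _ = (T * J * Tᵀ) * (T⁻¹)ᵀ := by simp only [mul_assoc]
      _ = J * (T⁻¹)ᵀ := by rw [hTsymp]
  have hs4 : Tᵀ * J = J * T⁻¹ := by
    have e1 : J * (J * Tᵀ) = J * (T⁻¹ * J) := by rw [hs1]
    rw [← mul_assoc, hJJ, neg_one_mul] at e1
    have e2 : Tᵀ = -(J * (T⁻¹ * J)) := by rw [← e1, neg_neg]
    calc Tᵀ * J = -(J * (T⁻¹ * J)) * J := by rw [← e2]
      _ = -(J * (T⁻¹ * (J * J))) := by simp only [neg_mul, mul_assoc]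
      _ = J * T⁻¹ := by rw [hJJ]; simp [mul_neg_one, mul_neg, neg_neg]
  -- unitary relations
  have hu1 : S * Tᵀ = T⁻¹ * S := by
    calc S * Tᵀ = (T⁻¹ * T) * (S * Tᵀ) := by rw [hT'T, one_mul]
      _ = T⁻¹ * (T * S * Tᵀ) := by simp only [mul_assoc]
      _ = T⁻¹ * S := by rw [hTunit]
  have hTinv : T⁻¹ = S * (Tᵀ * S') := by
    calc T⁻¹ = T⁻¹ * (S * S') := by rw [hSS', mul_one]
      _ = (T⁻¹ * S) * S' := by rw [mul_assoc]
      _ = (S * Tᵀ) * S' := by rw [hu1]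
      _ = S * (Tᵀ * S') := by rw [mul_assoc]
  have hTinvT : (T⁻¹)ᵀ = S' * (T * S) := by
    calc (T⁻¹)ᵀ = (S * (Tᵀ * S'))ᵀ := by rw [← hTinv]
      _ = (Tᵀ * S')ᵀ * Sᵀ := Matrix.transpose_mul _ _
      _ = (S'ᵀ * Tᵀᵀ) * Sᵀ := by rw [Matrix.transpose_mul]
      _ = S' * (T * S) := by rw [hSt, hS't, Matrix.transpose_transpose, mul_assoc]
  -- T commutes with S*S
  have hk : T * (J * S') = (J * S') * T := by
    calc T * (J * S') = (T * J) * S' := by rw [mul_assoc]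
      _ = (J * (T⁻¹)ᵀ) * S' := by rw [hs2]
      _ = J * ((S' * (T * S)) * S') := by rw [hTinvT, mul_assoc]
      _ = J * (S' * (T * (S * S'))) := by simp only [mul_assoc]
      _ = (J * S') * T := by rw [hSS', mul_one, ← mul_assoc]
  have hkk : (J * S') * (J * S') = -(S' * S') := by
    calc (J * S') * (J * S') = J * ((S' * J) * S') := by simp only [mul_assoc]
      _ = J * (J * (S' * S')) := by rw [hS'J, mul_assoc]
      _ = (J * J) * (S' * S') := by rw [← mul_assoc]
      _ = -(S' * S') := by rw [hJJ, neg_one_mul]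
  have hcommInv : T * (S' * S') = (S' * S') * T := by
    have e : T * ((J * S') * (J * S')) = ((J * S') * (J * S')) * T := by
      calc T * ((J * S') * (J * S')) = (T * (J * S')) * (J * S') := by rw [← mul_assoc]
        _ = ((J * S') * T) * (J * S') := by rw [hk]
        _ = (J * S') * (T * (J * S')) := by rw [mul_assoc]
        _ = (J * S') * ((J * S') * T) := by rw [hk]
        _ = ((J * S') * (J * S')) * T := by rw [← mul_assoc]
    rw [hkk, mul_neg, neg_mul] at e
    exact neg_inj.mp e
  have hSS'SS : (S' * S') * (S * S) = 1 := by
    calc (S' * S') * (S * S) = S' * ((S' * S) * S) := by simp only [mul_assoc]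
      _ = 1 := by rw [hS'S, one_mul, hS'S]
  have hSSS'S' : (S * S) * (S' * S') = 1 := by
    calc (S * S) * (S' * S') = S * ((S * S') * S') := by simp only [mul_assoc]
      _ = 1 := by rw [hSS', one_mul, hSS']
  have hcomm' : T * (S * S) = S * (S * T) := by
    calc T * (S * S) = ((S * S) * (S' * S')) * (T * (S * S)) := by rw [hSSS'S', one_mul]
      _ = ((S * S) * ((S' * S') * T)) * (S * S) := by simp only [mul_assoc]
      _ = ((S * S) * (T * (S' * S'))) * (S * S) := by rw [hcommInv]
      _ = (S * S) * (T * ((S' * S') * (S * S))) := by simp only [mul_assoc]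
      _ = S * (S * T) := by rw [hSS'SS, mul_one, mul_assoc]
  have hcancel : ∀ X : Matrix (Fin n × Fin 2) (Fin n × Fin 2) ℝ, S' * (S * X) = X := by
    intro X; rw [← mul_assoc, hS'S, one_mul]
  -- main computation
  rw [hSinv, hQeq]
  simp only [mul_assoc]
  rw [hSJ, move hs2, move hDJ, move hs4, move hS'J, ← mul_assoc, hJJ, neg_one_mul, neg_inj,
    hTinvT, hTinv]
  simp only [mul_assoc]
  rw [hcancel, move hS'D, hcomm', hcancel, hcancel]
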